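/- Let f(x) := ln(1 + x)/x for x > 0. For every natural number n ≥ 0 and every x > 0, the n-th derivative of f satisfies (−1)^n f^{(n)}(x) = n! · ∫_0^1 t^n / (1 + t·x)^{n+1} dt. -/

import Mathlib

open intervalIntegral Real Set MeasureTheory

lemma cont_integrand (n : ℕ) {x : ℝ} (hx : 0 < x) :
    ContinuousOn (fun t : ℝ => t ^ n / (1 + t * x) ^ (n + 1)) (Icc 0 1) := by
  apply ContinuousOn.div (by fun_prop) (by fun_prop)
  intro t ht
  have : (0:ℝ) < 1 + t * x := by nlinarith [ht.1, ht.2]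
  positivity

lemma base_case {x : ℝ} (hx : 0 < x) :
    Real.log (1 + x) / x = ∫ t in (0:ℝ)..1, t ^ 0 / (1 + t * x) ^ (0 + 1) := by
  have h : ∀ t ∈ uIcc (0:ℝ) 1,
      HasDerivAt (fun t : ℝ => Real.log (1 + t * x) / x) (t ^ 0 / (1 + t * x) ^ (0+1)) t := by
    intro t ht
    rw [uIcc_of_le zero_le_one] at ht
    have hpos : (0:ℝ) < 1 + t * x := by nlinarith [ht.1, ht.2]
    have h1 : HasDerivAt (fun t : ℝ => 1 + t * x) x t := by
      simpa using ((hasDerivAt_id t).mul_const x).const_add 1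
    have := (h1.log hpos.ne').div_const x
    rw [show t ^ 0 / (1 + t * x) ^ (0+1) = x / (1 + t * x) / x by
      rw [pow_zero, zero_add, pow_one]; field_simp]
    exact this
  have hint : IntervalIntegrable (fun t : ℝ => t ^ 0 / (1 + t * x) ^ (0+1)) volume 0 1 :=
    (cont_integrand 0 hx).intervalIntegrable_of_Icc zero_le_one
  have := intervalIntegral.integral_eq_sub_of_hasDerivAt h hint
  rw [this]
  simp

lemma key_deriv (n : ℕ) {x₀ : ℝ} (hx : 0 < x₀) :
    HasDerivAt (fun x : ℝ => ∫ t in (0:ℝ)..1, t ^ n / (1 + t * x) ^ (n + 1))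
      (-((n+1 : ℝ) * ∫ t in (0:ℝ)..1, t ^ (n+1) / (1 + t * x₀) ^ (n + 2))) x₀ := by
  have hball : ∀ x ∈ Metric.ball x₀ (x₀/2), 0 < x := by
    intro x hxb
    rw [Metric.mem_ball, Real.dist_eq, abs_lt] at hxb
    linarith [hxb.1]
  have key := intervalIntegral.hasDerivAt_integral_of_dominated_loc_of_deriv_le
    (F := fun x t => t ^ n / (1 + t * x) ^ (n + 1))
    (F' := fun x t => -((n+1 : ℝ) * (t ^ (n+1) / (1 + t * x) ^ (n + 2))))
    (bound := fun _ => (n+1 : ℝ)) (μ := MeasureTheory.volume) (Metric.ball_mem_nhds x₀ (half_pos hx))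
    (by
      filter_upwards [eventually_gt_nhds hx] with x hxpos
      exact ((cont_integrand n hxpos).mono (by rw [uIoc_of_le zero_le_one]; exact Ioc_subset_Icc_self)).aestronglyMeasurable measurableSet_uIoc)
    ((cont_integrand n hx).intervalIntegrable_of_Icc zero_le_one)
    (by
      apply ContinuousOn.aestronglyMeasurable _ measurableSet_uIoc
      apply ContinuousOn.neg
      apply ContinuousOn.mul continuousOn_const
      apply ((cont_integrand (n+1) hx).mono (by rw [uIoc_of_le zero_le_one]; exact Ioc_subset_Icc_self)))
    (by
      filter_upwards with t ht x hxb
      rw [uIoc_of_le zero_le_one] at ht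
      have hxpos := hball x hxb
      have h1 : (1:ℝ) ≤ 1 + t * x := by nlinarith [ht.1.le, ht.2]
      have htp : t ^ (n+1) ≤ 1 := pow_le_one₀ ht.1.le ht.2
      have hdp : (1:ℝ) ≤ (1 + t * x) ^ (n+2) := one_le_pow₀ h1
      have hposd : (0:ℝ) < (1 + t * x) ^ (n+2) := by positivity
      rw [norm_neg, norm_mul, Real.norm_eq_abs, Real.norm_eq_abs]
      rw [abs_of_nonneg (by positivity : (0:ℝ) ≤ (n:ℝ)+1),
        abs_of_nonneg (div_nonneg (pow_nonneg ht.1.le _) hposd.le)]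
      have : t ^ (n+1) / (1 + t * x) ^ (n+2) ≤ 1 := by
        rw [div_le_one hposd]; exact htp.trans hdp
      nlinarith)
    (intervalIntegrable_const)
    (by
      filter_upwards with t ht x hxb
      rw [uIoc_of_le zero_le_one] at ht
      have hxpos := hball x hxb
      have hpos : (0:ℝ) < 1 + t * x := by nlinarith [ht.1.le, ht.2]
      have h1 : HasDerivAt (fun x : ℝ => 1 + t * x) t x := by
        simpa using ((hasDerivAt_id x).const_mul t).const_add 1
      have h2 := h1.fun_pow (n+1)
      simp only [Nat.add_sub_cancel] at h2
      have := (hasDerivAt_const x (t ^ n)).fun_div h2 (pow_pos hpos _).ne'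
      convert this using 1
      · rfl
      push_cast
      field_simp
      ring)
  have h := key.2
  simp only [intervalIntegral.integral_neg, intervalIntegral.integral_const_mul] at h
  exact h

lemma aux_formula (n : ℕ) : ∀ x : ℝ, 0 < x →
    iteratedDeriv n (fun y : ℝ => Real.log (1 + y) / y) x =
      (-1 : ℝ) ^ n * (n.factorial : ℝ) * ∫ t in (0:ℝ)..1, t ^ n / (1 + t * x) ^ (n + 1) := by
  induction n with
  | zero => intro x hx; simpa using base_case hx
  | succ n ih =>
    intro x hx
    rw [iteratedDeriv_succ]
    have heq : iteratedDeriv n (fun y : ℝ => Real.log (1 + y) / y) =ᶠ[nhds x]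
        fun y => (-1 : ℝ) ^ n * (n.factorial : ℝ) * ∫ t in (0:ℝ)..1, t ^ n / (1 + t * y) ^ (n + 1) := by
      filter_upwards [isOpen_Ioi.mem_nhds (mem_Ioi.mpr hx)] with y hy
      exact ih y hy
    rw [heq.deriv_eq]
    have := ((key_deriv n hx).const_mul ((-1 : ℝ) ^ n * (n.factorial : ℝ))).deriv
    rw [this]
    rw [pow_succ, Nat.factorial_succ]
    push_cast
    ring

theorem iteratedDeriv_log_div_self (n : ℕ) (x : ℝ) (hx : 0 < x) :
    (-1 : ℝ) ^ n * iteratedDeriv n (fun y : ℝ => Real.log (1 + y) / y) x =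
      (n.factorial : ℝ) * ∫ t in (0:ℝ)..1, t ^ n / (1 + t * x) ^ (n + 1) := by
  rw [aux_formula n x hx, ← mul_assoc, ← mul_assoc, ← mul_pow]
  simp
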